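/- If R₀ ≤ 1, the disease-free equilibrium (1,0,0) of the system X' = μ_h(1−X) − δXZ, Y' = δXZ − (μ_h+γ)Y, Z' = σ(1−Z)Y − μ_v Z is globally asymptotically stable on the positive octant: every solution with X(0)>0, Y(0)≥0, Z(0)≥0 converges to (1,0,0) as t → ∞. -/

import Mathlib

open Real Filter

lemma antitoneOn_of_hasDerivAt_nonpos {f g : ℝ → ℝ} {s : Set ℝ} (hs : Convex ℝ s)
    (hf : ∀ t, HasDerivAt f (g t) t) (h : ∀ t ∈ interior s, g t ≤ 0) :
    AntitoneOn f s :=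
  antitoneOn_of_deriv_nonpos hs
    (fun t _ => (hf t).continuousAt.continuousWithinAt)
    (fun t _ => (hf t).differentiableAt.differentiableWithinAt)
    (fun t ht => by rw [(hf t).deriv]; exact h t ht)

lemma monotoneOn_of_hasDerivAt_nonneg {f g : ℝ → ℝ} {s : Set ℝ} (hs : Convex ℝ s)
    (hf : ∀ t, HasDerivAt f (g t) t) (h : ∀ t ∈ interior s, 0 ≤ g t) :
    MonotoneOn f s :=
  monotoneOn_of_deriv_nonneg hs
    (fun t _ => (hf t).continuousAt.continuousWithinAt)
    (fun t _ => (hf t).differentiableAt.differentiableWithinAt)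
    (fun t ht => by rw [(hf t).deriv]; exact h t ht)

set_option maxHeartbeats 1000000 in
lemma key_ineq (μh μv γ δ σ x₀ c ε κ κ' M x y z : ℝ)
    (hμh : 0 < μh) (hμv : 0 < μv) (hγ : 0 < γ) (hδ : 0 < δ) (hσ : 0 < σ)
    (hx₀ : 0 < x₀)
    (hc : c = σ*(δ+μh+γ))
    (hε : ε = min (σ/2) (c/(2*(μh+γ+μv))))
    (hκ : κ = min (ε*δ*x₀) (min (ε*σ/2) (c/4)))
    (hM : M = max σ (μh+γ))
    (hκ' : κ' = κ/(2*M^2))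
    (hR : σ*δ ≤ μv*(μh+γ))
    (hx : x₀ ≤ x) (hy : 0 ≤ y) (hz : 0 ≤ z) (hz1 : z ≤ 1) (hxy : x + y ≤ 1) :
    σ*(δ*x*z - (μh+γ)*y) + (μh+γ)*(σ*(1-z)*y - μv*z)
      - ε*((δ*x*z - (μh+γ)*y)*z + y*(σ*(1-z)*y - μv*z))
      ≤ -κ' * (σ*y + (μh+γ)*z - ε*(y*z))^2 := by
  subst hc
  have hcpos : 0 < σ*(δ+μh+γ) := by positivity
  have hεpos : 0 < ε := by
    rw [hε]; exact lt_min (by positivity) (by positivity)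
  have hε1 : ε ≤ σ/2 := by rw [hε]; exact min_le_left _ _
  have hε2 : ε*(μh+γ+μv) ≤ σ*(δ+μh+γ)/2 := by
    have h := min_le_right (σ/2) (σ*(δ+μh+γ)/(2*(μh+γ+μv)))
    rw [← hε] at h
    have hpos : (0:ℝ) < 2*(μh+γ+μv) := by positivity
    rw [le_div_iff₀ hpos] at h
    linarith
  have hκa : κ ≤ ε*δ*x₀ := by rw [hκ]; exact min_le_left _ _
  have hκb : κ ≤ ε*σ/2 := le_trans (by rw [hκ]; exact min_le_right _ _) (min_le_left _ _)
  have hκc : κ ≤ σ*(δ+μh+γ)/4 := le_trans (by rw [hκ]; exact min_le_right _ _) (min_le_right _ _)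
  have hκpos : 0 < κ := by
    rw [hκ]; exact lt_min (by positivity) (lt_min (by positivity) (by positivity))
  have hMσ : σ ≤ M := by rw [hM]; exact le_max_left _ _
  have hMγ : μh + γ ≤ M := by rw [hM]; exact le_max_right _ _
  have hMpos : 0 < M := lt_of_lt_of_le hσ hMσ
  have hκ'pos : 0 < κ' := by rw [hκ']; positivity
  have hy1 : y ≤ 1 := by linarith
  have hyz : 0 ≤ y*z := mul_nonneg hy hz
  -- Stage 1
  have h1 : σ*(δ*x*z - (μh+γ)*y) + (μh+γ)*(σ*(1-z)*y - μv*z) ≤ -(σ*(δ+μh+γ)*(y*z)) := by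
    have k1 : 0 ≤ σ*δ*(z*(1-x-y)) :=
      mul_nonneg (by positivity) (mul_nonneg hz (by linarith))
    have k2 : 0 ≤ z * (μv*(μh+γ) - σ*δ) := mul_nonneg hz (by linarith)
    linarith [k1, k2]
  -- Stage 2 prep
  have h2 : -(ε*((δ*x*z - (μh+γ)*y)*z + y*(σ*(1-z)*y - μv*z)))
      ≤ -(ε*δ*x₀*z^2) + ε*(μh+γ+μv)*(y*z) - ε*σ*((1-z)*y^2) := by
    have k1 : ε*δ*(x₀*z^2) ≤ ε*δ*(x*z^2) :=
      mul_le_mul_of_nonneg_left (mul_le_mul_of_nonneg_right hx (sq_nonneg z)) (by positivity)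
    linarith [k1]
  have h3 : ε*(μh+γ+μv)*(y*z) ≤ σ*(δ+μh+γ)/2*(y*z) :=
    mul_le_mul_of_nonneg_right hε2 hyz
  have hD : σ*(δ*x*z - (μh+γ)*y) + (μh+γ)*(σ*(1-z)*y - μv*z)
      - ε*((δ*x*z - (μh+γ)*y)*z + y*(σ*(1-z)*y - μv*z))
      ≤ -(σ*(δ+μh+γ)/2*(y*z)) - ε*δ*x₀*z^2 - ε*σ*((1-z)*y^2) := by linarith
  -- Stage 2
  have h4 : -(σ*(δ+μh+γ)/2*(y*z)) - ε*δ*x₀*z^2 - ε*σ*((1-z)*y^2) ≤ -κ*(y^2+z^2) := by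
    rcases le_or_gt z (1/2) with hhalf | hhalf
    · have k1 : ε*σ*((1/2)*y^2) ≤ ε*σ*((1-z)*y^2) :=
        mul_le_mul_of_nonneg_left
          (mul_le_mul_of_nonneg_right (by linarith) (sq_nonneg y)) (by positivity)
      have k2 : κ*z^2 ≤ ε*δ*x₀*z^2 := mul_le_mul_of_nonneg_right hκa (sq_nonneg z)
      have k3 : κ*y^2 ≤ ε*σ/2*y^2 := mul_le_mul_of_nonneg_right hκb (sq_nonneg y)
      have k4 : 0 ≤ σ*(δ+μh+γ)/2*(y*z) := mul_nonneg (by positivity) hyz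
      linarith [k1, k2, k3, k4]
    · have k0 : y^2/2 ≤ y*z := by
        nlinarith [mul_nonneg hy (by linarith : (0:ℝ) ≤ z - 1/2),
          mul_nonneg hy (by linarith : (0:ℝ) ≤ 1 - y)]
      have k1 := mul_le_mul_of_nonneg_left k0 (by positivity : (0:ℝ) ≤ σ*(δ+μh+γ)/2)
      have k2 : κ*z^2 ≤ ε*δ*x₀*z^2 := mul_le_mul_of_nonneg_right hκa (sq_nonneg z)
      have k3 : κ*y^2 ≤ σ*(δ+μh+γ)/4*y^2 := mul_le_mul_of_nonneg_right hκc (sq_nonneg y)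
      have k4 : 0 ≤ ε*σ*((1-z)*y^2) :=
        mul_nonneg (by positivity) (mul_nonneg (by linarith) (sq_nonneg y))
      linarith [k0, k1, k2, k3, k4]
  -- Stage 3
  have hW0 : 0 ≤ σ*y + (μh+γ)*z - ε*(y*z) := by
    have a1 : ε*(y*z) ≤ σ/2*(y*z) := mul_le_mul_of_nonneg_right hε1 hyz
    have a2 : y*z ≤ y*1 := mul_le_mul_of_nonneg_left hz1 hy
    have a3 : σ/2*(y*z) ≤ σ/2*(y*1) := mul_le_mul_of_nonneg_left a2 (by positivity)
    have a4 : 0 ≤ (μh+γ)*z := mul_nonneg (by positivity) hz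
    linarith [a1, a3, a4, mul_nonneg hσ.le hy]
  have hWle : σ*y + (μh+γ)*z - ε*(y*z) ≤ M*(y+z) := by
    have b1 := mul_le_mul_of_nonneg_right hMσ hy
    have b2 := mul_le_mul_of_nonneg_right hMγ hz
    have b3 : 0 ≤ ε*(y*z) := mul_nonneg hεpos.le hyz
    linarith [b1, b2, b3]
  have e1 : (σ*y + (μh+γ)*z - ε*(y*z))^2 ≤ 2*M^2*(y^2+z^2) := by
    have p := pow_le_pow_left₀ hW0 hWle 2
    have q : (M*(y+z))^2 ≤ 2*M^2*(y^2+z^2) := by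
      linarith [mul_nonneg (sq_nonneg M) (sq_nonneg (y-z))]
    linarith
  have e2 : κ'*((σ*y + (μh+γ)*z - ε*(y*z))^2) ≤ κ'*(2*M^2*(y^2+z^2)) :=
    mul_le_mul_of_nonneg_left e1 hκ'pos.le
  have e3 : κ'*(2*M^2*(y^2+z^2)) = κ*(y^2+z^2) := by
    rw [hκ']; field_simp
  linarith [hD, h4, e2, e3]

set_option maxHeartbeats 1000000 in
theorem disease_free_global_stability
    (μh μv γ δ σ : ℝ) (hμh : 0 < μh) (hμv : 0 < μv) (hγ : 0 < γ)
    (hδ : 0 < δ) (hσ : 0 < σ)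
    (R₀ : ℝ) (hR₀ : R₀ = σ * δ / (μv * (μh + γ))) (hR₀le : R₀ ≤ 1)
    (X Y Z : ℝ → ℝ)
    (hX : ∀ t, HasDerivAt X (μh * (1 - X t) - δ * X t * Z t) t)
    (hY : ∀ t, HasDerivAt Y (δ * X t * Z t - (μh + γ) * Y t) t)
    (hZ : ∀ t, HasDerivAt Z (σ * (1 - Z t) * Y t - μv * Z t) t)
    (hinv : ∀ t, 0 ≤ t → 0 < X t ∧ 0 ≤ Y t ∧ 0 ≤ Z t ∧ X t + Y t ≤ 1 ∧ Z t ≤ 1)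
    (h0 : 0 < X 0 ∧ 0 ≤ Y 0 ∧ 0 ≤ Z 0) :
    Filter.Tendsto (fun t => (X t, Y t, Z t)) Filter.atTop (nhds (1, 0, 0)) := by
  obtain ⟨hX0, hY0', hZ0'⟩ := h0
  have hRle : σ * δ ≤ μv * (μh + γ) := by
    rw [hR₀, div_le_one (by positivity)] at hR₀le
    exact hR₀le
  -- uniform lower bound on X
  set x₀ : ℝ := min (X 0) (μh / (μh + δ)) with hx₀def
  have hx₀pos : 0 < x₀ := lt_min hX0 (by positivity)
  have hg : ∀ t, HasDerivAt (fun t => (X t - μh / (μh + δ)) * Real.exp ((μh + δ) * t))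
      ((μh * (1 - X t) - δ * X t * Z t) * Real.exp ((μh + δ) * t)
        + (X t - μh / (μh + δ)) * (Real.exp ((μh + δ) * t) * ((μh + δ) * 1))) t := fun t =>
    ((hX t).sub_const _).mul (((hasDerivAt_id t).const_mul (μh + δ)).exp)
  have hgmono : MonotoneOn (fun t => (X t - μh / (μh + δ)) * Real.exp ((μh + δ) * t))
      (Set.Ici (0:ℝ)) := by
    apply monotoneOn_of_hasDerivAt_nonneg (convex_Ici 0) hg
    intro t ht
    rw [interior_Ici] at ht
    obtain ⟨hXp, hYp, hZp, hXYp, hZ1p⟩ := hinv t ht.le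
    have heq : (μh * (1 - X t) - δ * X t * Z t) * Real.exp ((μh + δ) * t)
        + (X t - μh / (μh + δ)) * (Real.exp ((μh + δ) * t) * ((μh + δ) * 1))
        = Real.exp ((μh + δ) * t) * (δ * X t * (1 - Z t)) := by
      field_simp
      ring
    rw [heq]
    exact mul_nonneg (Real.exp_pos _).le
      (mul_nonneg (mul_nonneg hδ.le hXp.le) (by linarith))
  have hXlb : ∀ t, 0 ≤ t → x₀ ≤ X t := by
    intro t ht
    have h1 := hgmono Set.self_mem_Ici ht ht
    simp only [mul_zero, Real.exp_zero, mul_one] at h1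
    rcases le_total (μh / (μh + δ)) (X t) with h | h
    · exact le_trans (min_le_right _ _) h
    · have he1 : (1:ℝ) ≤ Real.exp ((μh + δ) * t) := by
        rw [← Real.exp_zero]
        exact Real.exp_le_exp.mpr (by positivity)
      have hneg : X t - μh / (μh + δ) ≤ 0 := by linarith
      have h2 : (X t - μh / (μh + δ)) * Real.exp ((μh + δ) * t) ≤ X t - μh / (μh + δ) := by
        have := mul_le_mul_of_nonpos_left he1 hneg
        rw [mul_one] at this
        linarith
      have h3 : x₀ ≤ X 0 := min_le_left _ _
      linarith
  -- constants
  set ε : ℝ := min (σ/2) (σ*(δ+μh+γ)/(2*(μh+γ+μv))) with hεdef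
  set κ : ℝ := min (ε*δ*x₀) (min (ε*σ/2) (σ*(δ+μh+γ)/4)) with hκdef
  set M : ℝ := max σ (μh+γ) with hMdef
  set κ' : ℝ := κ/(2*M^2) with hκ'def
  have hεpos : 0 < ε := by rw [hεdef]; exact lt_min (by positivity) (by positivity)
  have hε1 : ε ≤ σ/2 := by rw [hεdef]; exact min_le_left _ _
  have hκpos : 0 < κ := by
    rw [hκdef]; exact lt_min (by positivity) (lt_min (by positivity) (by positivity))
  have hMpos : 0 < M := lt_of_lt_of_le hσ (by rw [hMdef]; exact le_max_left _ _)
  have hκ'pos : 0 < κ' := by rw [hκ'def]; positivity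
  -- the Lyapunov function
  set W : ℝ → ℝ := fun t => σ * Y t + (μh + γ) * Z t - ε * (Y t * Z t) with hWdef
  set DW : ℝ → ℝ := fun t =>
    σ * (δ * X t * Z t - (μh + γ) * Y t) + (μh + γ) * (σ * (1 - Z t) * Y t - μv * Z t)
      - ε * ((δ * X t * Z t - (μh + γ) * Y t) * Z t
          + Y t * (σ * (1 - Z t) * Y t - μv * Z t)) with hDWdef
  have hWderiv : ∀ t, HasDerivAt W (DW t) t := fun t =>
    (((hY t).const_mul σ).add ((hZ t).const_mul (μh + γ))).sub
      (((hY t).mul (hZ t)).const_mul ε)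
  have hDWle : ∀ t, 0 ≤ t → DW t ≤ -κ' * (W t)^2 := by
    intro t ht
    obtain ⟨hXp, hYp, hZp, hXYp, hZ1p⟩ := hinv t ht
    exact key_ineq μh μv γ δ σ x₀ (σ*(δ+μh+γ)) ε κ κ' M (X t) (Y t) (Z t)
      hμh hμv hγ hδ hσ hx₀pos rfl hεdef hκdef hMdef hκ'def hRle
      (hXlb t ht) hYp hZp hZ1p hXYp
  have hWanti : AntitoneOn W (Set.Ici (0:ℝ)) := by
    apply antitoneOn_of_hasDerivAt_nonpos (convex_Ici 0) hWderiv
    intro t ht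
    rw [interior_Ici] at ht
    have h1 := hDWle t ht.le
    linarith [mul_nonneg hκ'pos.le (sq_nonneg (W t))]
  have hWlb : ∀ t, 0 ≤ t → σ/2 * Y t + (μh + γ) * Z t ≤ W t := by
    intro t ht
    obtain ⟨hXp, hYp, hZp, hXYp, hZ1p⟩ := hinv t ht
    have a1 : ε * (Y t * Z t) ≤ σ/2 * (Y t * Z t) :=
      mul_le_mul_of_nonneg_right hε1 (mul_nonneg hYp hZp)
    have a2 : Y t * Z t ≤ Y t * 1 := mul_le_mul_of_nonneg_left hZ1p hYp
    have a3 : σ/2 * (Y t * Z t) ≤ σ/2 * (Y t * 1) := mul_le_mul_of_nonneg_left a2 (by positivity)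
    simp only [hWdef]
    nlinarith
  have hWnonneg : ∀ t, 0 ≤ t → 0 ≤ W t := by
    intro t ht
    obtain ⟨hXp, hYp, hZp, hXYp, hZ1p⟩ := hinv t ht
    exact le_trans (add_nonneg (mul_nonneg (by linarith) hYp)
      (mul_nonneg (by linarith) hZp)) (hWlb t ht)
  -- decay estimate
  have hdecay : ∀ T, 0 < T → κ' * (W T)^2 * T ≤ W 0 := by
    intro T hT
    have hf : ∀ t, HasDerivAt (fun t => W t + κ' * (W T)^2 * t)
        (DW t + κ' * (W T)^2 * 1) t :=
      fun t => (hWderiv t).add ((hasDerivAt_id t).const_mul (κ' * (W T)^2))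
    have hanti : AntitoneOn (fun t => W t + κ' * (W T)^2 * t) (Set.Icc 0 T) := by
      apply antitoneOn_of_hasDerivAt_nonpos (convex_Icc 0 T) hf
      intro t ht
      rw [interior_Icc] at ht
      have h1 := hDWle t ht.1.le
      have h2 : W T ≤ W t := hWanti (Set.mem_Ici.mpr ht.1.le) (Set.mem_Ici.mpr hT.le) ht.2.le
      have h3 : (W T)^2 ≤ (W t)^2 := pow_le_pow_left₀ (hWnonneg T hT.le) h2 2
      linarith [mul_le_mul_of_nonneg_left h3 hκ'pos.le]
    have h4 := hanti (Set.left_mem_Icc.mpr hT.le) (Set.right_mem_Icc.mpr hT.le) hT.le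
    simp only [mul_zero, add_zero] at h4
    have h5 := hWnonneg T hT.le
    linarith
  -- W tends to 0
  have hWsq : Filter.Tendsto (fun t => (W t)^2) Filter.atTop (nhds 0) := by
    apply squeeze_zero' (Filter.eventually_atTop.mpr ⟨0, fun t _ => sq_nonneg (W t)⟩)
      (g := fun t => (W 0 / κ') * t⁻¹)
      (Filter.eventually_atTop.mpr ⟨1, fun t ht => ?_⟩)
    · simpa using tendsto_inv_atTop_zero.const_mul (W 0 / κ')
    · have ht0 : (0:ℝ) < t := by linarith
      show (W t)^2 ≤ W 0 / κ' * t⁻¹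
      have h1 := hdecay t ht0
      have h2 : W 0 / κ' * t⁻¹ = W 0 / (κ' * t) := by
        field_simp
      rw [h2, le_div_iff₀ (by positivity)]
      linarith
  have hWtend : Filter.Tendsto W Filter.atTop (nhds 0) := by
    have hsqrt : Filter.Tendsto (fun t => Real.sqrt ((W t)^2)) Filter.atTop (nhds 0) := by
      have := (Real.continuous_sqrt.tendsto 0).comp hWsq
      rwa [Real.sqrt_zero] at this
    apply hsqrt.congr'
    filter_upwards [Filter.eventually_ge_atTop (0:ℝ)] with t ht
    exact Real.sqrt_sq (hWnonneg t ht)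
  -- Y and Z tend to 0
  have hYtend : Filter.Tendsto Y Filter.atTop (nhds 0) := by
    apply squeeze_zero' (Filter.eventually_atTop.mpr ⟨0, fun t ht => (hinv t ht).2.1⟩)
      (g := fun t => 2/σ * W t)
      (Filter.eventually_atTop.mpr ⟨0, fun t ht => ?_⟩)
    · simpa using hWtend.const_mul (2/σ)
    · obtain ⟨hXp, hYp, hZp, hXYp, hZ1p⟩ := hinv t ht
      have h1 := hWlb t ht
      have h2 : 2/σ * (σ/2 * Y t + (μh + γ) * Z t) ≤ 2/σ * W t :=
        mul_le_mul_of_nonneg_left h1 (by positivity)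
      have h3 : 2/σ * (σ/2 * Y t) = Y t := by field_simp
      linarith [h2, h3, mul_nonneg (by positivity : (0:ℝ) ≤ 2/σ) (mul_nonneg (by positivity : (0:ℝ) ≤ μh + γ) hZp)]
  have hZtend : Filter.Tendsto Z Filter.atTop (nhds 0) := by
    apply squeeze_zero' (Filter.eventually_atTop.mpr ⟨0, fun t ht => (hinv t ht).2.2.1⟩)
      (g := fun t => 1/(μh+γ) * W t)
      (Filter.eventually_atTop.mpr ⟨0, fun t ht => ?_⟩)
    · simpa using hWtend.const_mul (1/(μh+γ))
    · obtain ⟨hXp, hYp, hZp, hXYp, hZ1p⟩ := hinv t ht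
      have h1 := hWlb t ht
      have h2 : 1/(μh+γ) * (σ/2 * Y t + (μh + γ) * Z t) ≤ 1/(μh+γ) * W t :=
        mul_le_mul_of_nonneg_left h1 (by positivity)
      have h3 : 1/(μh+γ) * ((μh + γ) * Z t) = Z t := by field_simp
      linarith [h2, h3, mul_nonneg (by positivity : (0:ℝ) ≤ 1/(μh+γ)) (mul_nonneg (by positivity : (0:ℝ) ≤ σ/2) hYp)]
  -- X tends to 1
  have hXtend : Filter.Tendsto X Filter.atTop (nhds 1) := by
    have hU : Filter.Tendsto (fun t => 1 - X t) Filter.atTop (nhds 0) := by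
      rw [Metric.tendsto_nhds]
      intro e he
      obtain ⟨t₁, ht₁⟩ := Filter.eventually_atTop.mp
        (hZtend.eventually_lt_const (by positivity : (0:ℝ) < μh*e/(2*δ)))
      set t₀ : ℝ := max t₁ 0 with ht₀def
      have ht₀0 : (0:ℝ) ≤ t₀ := le_max_right _ _
      have hq : ∀ t, HasDerivAt (fun t => ((1 - e/2) - X t) * Real.exp (μh * t))
          ((-(μh * (1 - X t) - δ * X t * Z t)) * Real.exp (μh * t)
            + ((1 - e/2) - X t) * (Real.exp (μh * t) * (μh * 1))) t := fun t =>
        ((hX t).const_sub _).mul (((hasDerivAt_id t).const_mul μh).exp)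
      have hqanti : AntitoneOn (fun t => ((1 - e/2) - X t) * Real.exp (μh * t))
          (Set.Ici t₀) := by
        apply antitoneOn_of_hasDerivAt_nonpos (convex_Ici t₀) hq
        intro t ht
        rw [interior_Ici] at ht
        obtain ⟨hXp, hYp, hZp, hXYp, hZ1p⟩ := hinv t (le_trans ht₀0 ht.le)
        have hZe : Z t < μh*e/(2*δ) := ht₁ t (le_trans (le_max_left _ _) ht.le)
        have heq : (-(μh * (1 - X t) - δ * X t * Z t)) * Real.exp (μh * t)
            + ((1 - e/2) - X t) * (Real.exp (μh * t) * (μh * 1))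
            = Real.exp (μh * t) * (δ * X t * Z t - μh * (e/2)) := by ring
        rw [heq]
        apply mul_nonpos_of_nonneg_of_nonpos (Real.exp_pos _).le
        have a1 : 0 ≤ δ * Z t * (1 - X t) := by
          apply mul_nonneg (mul_nonneg hδ.le hZp); linarith
        have a2 : δ * Z t < δ * (μh*e/(2*δ)) := mul_lt_mul_of_pos_left hZe hδ
        have a3 : δ * (μh*e/(2*δ)) = μh * (e/2) := by field_simp
        linarith [a1, a2, a3]
      have hexp : Filter.Tendsto (fun t => Real.exp (μh * t₀ - μh * t))
          Filter.atTop (nhds 0) := by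
        apply Real.tendsto_exp_atBot.comp
        have h1 : Filter.Tendsto (fun t : ℝ => -(μh * t)) Filter.atTop Filter.atBot :=
          Filter.tendsto_neg_atTop_atBot.comp
            (Filter.Tendsto.const_mul_atTop hμh Filter.tendsto_id)
        have h2 := Filter.tendsto_atBot_add_const_left Filter.atTop (μh * t₀) h1
        simpa [sub_eq_add_neg] using h2
      filter_upwards [Filter.eventually_ge_atTop t₀,
        hexp.eventually_lt_const (by positivity : (0:ℝ) < e/2)] with t h1 h2
      obtain ⟨hXp, hYp, hZp, hXYp, hZ1p⟩ := hinv t (le_trans ht₀0 h1)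
      obtain ⟨hXp0, hYp0, hZp0, hXYp0, hZ1p0⟩ := hinv t₀ ht₀0
      have hqle := hqanti Set.self_mem_Ici h1 h1
      simp only at hqle
      have hb1 : ((1 - e/2) - X t₀) * Real.exp (μh * t₀) ≤ 1 * Real.exp (μh * t₀) :=
        mul_le_mul_of_nonneg_right (by linarith) (Real.exp_pos _).le
      have hb2 : ((1 - e/2) - X t) * Real.exp (μh * t) ≤ Real.exp (μh * t₀) := by
        rw [one_mul] at hb1; linarith
      have hb3 : (1 - e/2) - X t ≤ Real.exp (μh * t₀ - μh * t) := by
        rw [Real.exp_sub]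
        exact (le_div_iff₀ (Real.exp_pos _)).mpr hb2
      rw [Real.dist_eq, sub_zero, abs_lt]
      constructor <;> linarith
    have := (tendsto_const_nhds (x := (1:ℝ))).sub hU
    simp only [sub_sub_cancel, sub_zero] at this
    exact this
  exact hXtend.prodMk_nhds (hYtend.prodMk_nhds hZtend)
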